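/- Let G be a graph and let v be a vertex of G with at least four pendant leaves attached. Then in Non-Disconnecting Arc-Kayles, the graph G has the same outcome as the graph G' obtained from G by deleting one of these leaves (so that v still has at least three leaves). -/
import Mathlib

set_option linter.unusedSectionVars false

open SimpleGraph Finset

variable {V : Type*} [Fintype V] [DecidableEq V]

/-- A legal move in Non-Disconnecting Arc-Kayles on position `s`. -/
def NDLegal (G : SimpleGraph V) (s : Finset V) (u v : V) : Prop :=
  u ∈ s ∧ v ∈ s ∧ G.Adj u v ∧
    (s \ {u, v} = ∅ ∨ (G.induce ((s \ {u, v} : Finset V) : Set V)).Connected)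

/-- Fuel-indexed winning predicate (normal play). -/
def NDWinAux (G : SimpleGraph V) : ℕ → Finset V → Prop
  | 0, _ => False
  | n + 1, s => ∃ u v, NDLegal G s u v ∧ ¬ NDWinAux G n (s \ {u, v})

/-- The player to move wins Non-Disconnecting Arc-Kayles from position `s`. -/
def NDFirstWins (G : SimpleGraph V) (s : Finset V) : Prop :=
  NDWinAux G s.card s

lemma notMem_pair' {a u w : V} (h1 : a ≠ u) (h2 : a ≠ w) : a ∉ ({u, w} : Finset V) := by
  simp [h1, h2]

lemma ndwinaux_empty (G : SimpleGraph V) (m : ℕ) : ¬ NDWinAux G m (∅ : Finset V) := by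
  cases m with
  | zero => exact id
  | succ n =>
    rintro ⟨u, w, ⟨hu, -, -, -⟩, -⟩
    exact absurd hu (Finset.notMem_empty u)

lemma ndlegal_card (G : SimpleGraph V) {s : Finset V} {u w : V} (h : NDLegal G s u w) :
    (s \ {u, w}).card + 2 = s.card := by
  obtain ⟨hu, hw, hadj, -⟩ := h
  have hne := hadj.ne
  have hsub : ({u, w} : Finset V) ⊆ s := by
    intro x hx
    simp only [Finset.mem_insert, Finset.mem_singleton] at hx
    rcases hx with rfl | rfl <;> assumption
  have h2 : ({u, w} : Finset V).card = 2 := by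
    rw [Finset.card_insert_of_notMem (by simpa using hne), Finset.card_singleton]
  have hle : 2 ≤ s.card := h2 ▸ Finset.card_le_card hsub
  rw [Finset.card_sdiff_of_subset hsub, h2]
  omega

lemma ndwinaux_fuel (G : SimpleGraph V) :
    ∀ n m (s : Finset V), s.card ≤ n → s.card ≤ m → (NDWinAux G n s ↔ NDWinAux G m s) := by
  intro n
  induction n with
  | zero =>
    intro m s hn _
    obtain rfl : s = ∅ := Finset.card_eq_zero.mp (Nat.le_zero.mp hn)
    exact iff_of_false (ndwinaux_empty G _) (ndwinaux_empty G _)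
  | succ n ih =>
    intro m s hn hm
    cases m with
    | zero =>
      obtain rfl : s = ∅ := Finset.card_eq_zero.mp (Nat.le_zero.mp hm)
      exact iff_of_false (ndwinaux_empty G _) (ndwinaux_empty G _)
    | succ m' =>
      constructor
      · rintro ⟨u, w, hleg, hnw⟩
        refine ⟨u, w, hleg, fun h => hnw ?_⟩
        have hc := ndlegal_card G hleg
        exact (ih m' (s \ {u, w}) (by omega) (by omega)).mpr h
      · rintro ⟨u, w, hleg, hnw⟩
        refine ⟨u, w, hleg, fun h => hnw ?_⟩
        have hc := ndlegal_card G hleg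
        exact (ih m' (s \ {u, w}) (by omega) (by omega)).mp h

lemma leaf_disconn (G : SimpleGraph V) {v a b : V} (T : Set V)
    (ha : a ∈ T) (hb : b ∈ T) (hab : a ≠ b) (hv : v ∉ T)
    (hleaf : ∀ x, G.Adj a x ↔ x = v) :
    ¬ (G.induce T).Connected := by
  intro h
  obtain ⟨w⟩ := h.preconnected ⟨a, ha⟩ ⟨b, hb⟩
  have key : ∀ (x : T) (w : (G.induce T).Walk ⟨a, ha⟩ x), x = ⟨a, ha⟩ := by
    intro x w
    cases w with
    | nil => rfl
    | @cons _ c _ hadj p =>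
      have : (c : V) = v := (hleaf c).mp hadj
      exact absurd (this ▸ c.2) hv
  exact hab (congrArg Subtype.val (key ⟨b, hb⟩ w)).symm

lemma pendant_conn (G : SimpleGraph V) {v l : V}
    (hleaf : ∀ x, G.Adj l x ↔ x = v) (S : Set V) (hv : v ∈ S) (hl : l ∉ S) :
    (G.induce (insert l S)).Connected ↔ (G.induce S).Connected := by
  have hlv : G.Adj l v := (hleaf v).mpr rfl
  have hvl : v ≠ l := fun h => G.irrefl (h ▸ hlv)
  have hmem : ∀ x : ↥(insert l S), (x : V) ≠ l → (x : V) ∈ S := by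
    intro x hx
    rcases x.2 with h | h
    · exact absurd h hx
    · exact h
  set f : ↥(insert l S) → ↥S := fun x =>
    if hx : (x : V) = l then ⟨v, hv⟩ else ⟨x, hmem x hx⟩ with hf
  have fval : ∀ x : ↥(insert l S), ((f x) : V) = if (x : V) = l then v else (x : V) := by
    intro x
    by_cases hx : (x : V) = l <;> simp [hf, hx]
  haveI : Nonempty ↥S := ⟨⟨v, hv⟩⟩
  haveI : Nonempty ↥(insert l S) := ⟨⟨v, Or.inr hv⟩⟩
  constructor
  · intro h
    have key : ∀ (a b : ↥(insert l S)) (w : (G.induce (insert l S)).Walk a b),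
        (G.induce S).Reachable (f a) (f b) := by
      intro a b w
      induction w with
      | nil => exact Reachable.refl _
      | @cons x c d hadj p ih =>
        refine Reachable.trans ?_ ih
        have hadj' : G.Adj (x : V) (c : V) := hadj
        by_cases hx : (x : V) = l
        · have hc : (c : V) = v := (hleaf _).mp (by have h2 := hadj'; rw [hx] at h2; exact h2)
          have hcl : (c : V) ≠ l := by rw [hc]; exact hvl
          have heq : f x = f c := Subtype.ext (by rw [fval, fval, if_pos hx, if_neg hcl, hc])
          rw [heq]
        · by_cases hc : (c : V) = l
          · have hx' : (x : V) = v := (hleaf _).mp (by have h2 := hadj'.symm; rw [hc] at h2; exact h2)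
            have heq : f x = f c := Subtype.ext (by rw [fval, fval, if_pos hc, if_neg hx, hx'])
            rw [heq]
          · have hadjS : (G.induce S).Adj ⟨(x : V), hmem x hx⟩ ⟨(c : V), hmem c hc⟩ := hadj'
            have hfx : f x = ⟨(x : V), hmem x hx⟩ := Subtype.ext (by rw [fval, if_neg hx])
            have hfc : f c = ⟨(c : V), hmem c hc⟩ := Subtype.ext (by rw [fval, if_neg hc])
            rw [hfx, hfc]
            exact hadjS.reachable
    refine ⟨fun x y => ?_⟩
    have hx : f ⟨(x : V), Or.inr x.2⟩ = x :=
      Subtype.ext (by rw [fval, if_neg (show ¬((x : V) = l) from fun h => hl (h ▸ x.2))])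
    have hy : f ⟨(y : V), Or.inr y.2⟩ = y :=
      Subtype.ext (by rw [fval, if_neg (show ¬((y : V) = l) from fun h => hl (h ▸ y.2))])
    obtain ⟨w⟩ := h.preconnected ⟨(x : V), Or.inr x.2⟩ ⟨(y : V), Or.inr y.2⟩
    have hr := key _ _ w
    rwa [hx, hy] at hr
  · intro h
    let hom : (G.induce S) →g (G.induce (insert l S)) :=
      ⟨fun z => ⟨(z : V), Or.inr z.2⟩, fun hadj => hadj⟩
    have reach_v : ∀ x : ↥(insert l S),
        (G.induce (insert l S)).Reachable x ⟨v, Or.inr hv⟩ := by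
      intro x
      by_cases hx : (x : V) = l
      · have hxv : (G.induce (insert l S)).Adj x ⟨v, Or.inr hv⟩ := by
          show G.Adj (x : V) v
          rw [hx]; exact hlv
        exact hxv.reachable
      · have hr := Reachable.map hom (h.preconnected ⟨(x : V), hmem x hx⟩ ⟨v, hv⟩)
        have e1 : hom ⟨(x : V), hmem x hx⟩ = x := Subtype.ext rfl
        have e2 : hom ⟨v, hv⟩ = (⟨v, Or.inr hv⟩ : ↥(insert l S)) := Subtype.ext rfl
        rwa [e1, e2] at hr
    exact ⟨fun x y => (reach_v x).trans (reach_v y).symm⟩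

lemma ndlegal_avoid (G : SimpleGraph V) {v : V} (ℓ : Fin 4 → V)
    (hinj : Function.Injective ℓ)
    (hleaf : ∀ i : Fin 4, ∀ x : V, G.Adj (ℓ i) x ↔ x = v)
    {s : Finset V} {u w : V} (hv : v ∈ s) (hl : ∀ i : Fin 4, i ≠ 3 → ℓ i ∈ s)
    (hleg : NDLegal G s u w) : u ≠ v ∧ w ≠ v := by
  have hlv : ∀ i : Fin 4, ℓ i ≠ v := fun i h => G.irrefl (h ▸ (hleaf i v).mpr rfl)
  have main : ∀ z : V, ¬ (NDLegal G s v z) := by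
    rintro z ⟨hv', hz, hadjz, hconz⟩
    have hpair : ∃ i j : Fin 4, i ≠ 3 ∧ j ≠ 3 ∧ i ≠ j ∧ ℓ i ≠ z ∧ ℓ j ≠ z := by
      by_cases h0 : ℓ 0 = z
      · exact ⟨1, 2, by decide, by decide, by decide,
          fun h => (by decide : (1 : Fin 4) ≠ 0) (hinj (h.trans h0.symm)),
          fun h => (by decide : (2 : Fin 4) ≠ 0) (hinj (h.trans h0.symm))⟩
      · by_cases h1 : ℓ 1 = z
        · exact ⟨0, 2, by decide, by decide, by decide, h0,
            fun h => (by decide : (2 : Fin 4) ≠ 1) (hinj (h.trans h1.symm))⟩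
        · exact ⟨0, 1, by decide, by decide, by decide, h0, h1⟩
    obtain ⟨i, j, hi3, hj3, hij, hiz, hjz⟩ := hpair
    have hmemi : ℓ i ∈ s \ {v, z} :=
      Finset.mem_sdiff.mpr ⟨hl i hi3, notMem_pair' (hlv i) hiz⟩
    have hmemj : ℓ j ∈ s \ {v, z} :=
      Finset.mem_sdiff.mpr ⟨hl j hj3, notMem_pair' (hlv j) hjz⟩
    have hconn := hconz.resolve_left (Finset.ne_empty_of_mem hmemi)
    refine leaf_disconn G (((s \ {v, z} : Finset V) : Set V))
      (Finset.mem_coe.mpr hmemi) (Finset.mem_coe.mpr hmemj)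
      (fun h => hij (hinj h)) ?_ (hleaf i) hconn
    intro h
    exact (Finset.mem_sdiff.mp (Finset.mem_coe.mp h)).2 (Finset.mem_insert_self v {z})
  obtain ⟨hu, hw, hadj, hcon⟩ := hleg
  constructor
  · rintro rfl
    exact main w ⟨hu, hw, hadj, hcon⟩
  · rintro rfl
    have hcon' : s \ {w, u} = ∅ ∨ (G.induce ((s \ {w, u} : Finset V) : Set V)).Connected := by
      rwa [Finset.pair_comm] at hcon
    exact main u ⟨hw, hu, hadj.symm, hcon'⟩

lemma ndwin_main (G : SimpleGraph V) (v : V) (ℓ : Fin 4 → V)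
    (hinj : Function.Injective ℓ)
    (hleaf : ∀ i : Fin 4, ∀ x : V, G.Adj (ℓ i) x ↔ x = v) :
    ∀ n (s : Finset V), v ∈ s → (∀ i, ℓ i ∈ s) →
      (NDWinAux G n s ↔ NDWinAux G n (s \ {ℓ 3})) := by
  have hlv : ∀ i : Fin 4, ℓ i ≠ v := fun i h => G.irrefl (h ▸ (hleaf i v).mpr rfl)
  intro n
  induction n with
  | zero => intro s _ _; exact Iff.rfl
  | succ n ih =>
    intro s hv hl
    have avoid : ∀ u w : V, NDLegal G s u w ∨ NDLegal G (s \ {ℓ 3}) u w →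
        u ≠ v ∧ w ≠ v ∧ (∀ i : Fin 4, u ≠ ℓ i ∧ w ≠ ℓ i) := by
      intro u w hleg
      have hadj : G.Adj u w := by rcases hleg with h | h <;> exact h.2.2.1
      have huvwv : u ≠ v ∧ w ≠ v := by
        rcases hleg with h | h
        · exact ndlegal_avoid G ℓ hinj hleaf hv (fun i _ => hl i) h
        · refine ndlegal_avoid G ℓ hinj hleaf ?_ ?_ h
          · exact Finset.mem_sdiff.mpr ⟨hv, Finset.notMem_singleton.mpr (Ne.symm (hlv 3))⟩
          · intro i hi3
            exact Finset.mem_sdiff.mpr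
              ⟨hl i, Finset.notMem_singleton.mpr (fun h => hi3 (hinj h))⟩
      refine ⟨huvwv.1, huvwv.2, fun i => ⟨?_, ?_⟩⟩
      · rintro rfl
        exact huvwv.2 ((hleaf i w).mp hadj)
      · rintro rfl
        exact huvwv.1 ((hleaf i u).mp hadj.symm)
    have key : ∀ u w : V, u ≠ v → w ≠ v → (∀ i : Fin 4, u ≠ ℓ i ∧ w ≠ ℓ i) →
        ((NDLegal G s u w ↔ NDLegal G (s \ {ℓ 3}) u w) ∧
         (s \ {ℓ 3}) \ {u, w} = (s \ {u, w}) \ {ℓ 3}) := by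
      intro u w huv hwv hli
      have hTset : (s \ {ℓ 3}) \ {u, w} = (s \ {u, w}) \ {ℓ 3} := by
        ext x; simp only [Finset.mem_sdiff]; tauto
      refine ⟨?_, hTset⟩
      have hvT : v ∈ s \ {u, w} :=
        Finset.mem_sdiff.mpr ⟨hv, notMem_pair' (Ne.symm huv) (Ne.symm hwv)⟩
      have hl3T : ℓ 3 ∈ s \ {u, w} :=
        Finset.mem_sdiff.mpr ⟨hl 3, notMem_pair' (Ne.symm (hli 3).1) (Ne.symm (hli 3).2)⟩
      have hvT' : v ∈ (s \ {u, w}) \ {ℓ 3} :=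
        Finset.mem_sdiff.mpr ⟨hvT, Finset.notMem_singleton.mpr (Ne.symm (hlv 3))⟩
      have hTne : s \ {u, w} ≠ ∅ := Finset.ne_empty_of_mem hvT
      have hT'ne : (s \ {u, w}) \ {ℓ 3} ≠ ∅ := Finset.ne_empty_of_mem hvT'
      have hinsert : (insert (ℓ 3) ((((s \ {u, w}) \ {ℓ 3} : Finset V)) : Set V)) =
          (((s \ {u, w} : Finset V)) : Set V) := by
        ext x
        rw [Set.mem_insert_iff, Finset.mem_coe, Finset.mem_coe, Finset.mem_sdiff,
          Finset.mem_singleton]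
        constructor
        · rintro (rfl | ⟨h, -⟩)
          · exact hl3T
          · exact h
        · intro hx
          by_cases hx3 : x = ℓ 3
          · exact Or.inl hx3
          · exact Or.inr ⟨hx, hx3⟩
      have hconn : (G.induce (((s \ {u, w} : Finset V)) : Set V)).Connected ↔
          (G.induce ((((s \ {u, w}) \ {ℓ 3} : Finset V)) : Set V)).Connected := by
        rw [← hinsert]
        refine pendant_conn G (hleaf 3) _ (Finset.mem_coe.mpr hvT') ?_
        intro h
        exact (Finset.mem_sdiff.mp (Finset.mem_coe.mp h)).2 (Finset.mem_singleton_self _)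
      unfold NDLegal
      rw [hTset]
      constructor
      · rintro ⟨hu, hw, hadj, hcon⟩
        refine ⟨Finset.mem_sdiff.mpr ⟨hu, Finset.notMem_singleton.mpr (hli 3).1⟩,
          Finset.mem_sdiff.mpr ⟨hw, Finset.notMem_singleton.mpr (hli 3).2⟩, hadj, ?_⟩
        exact Or.inr (hconn.mp (hcon.resolve_left hTne))
      · rintro ⟨hu, hw, hadj, hcon⟩
        refine ⟨(Finset.mem_sdiff.mp hu).1, (Finset.mem_sdiff.mp hw).1, hadj, ?_⟩
        exact Or.inr (hconn.mpr (hcon.resolve_left hT'ne))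
    have hinv : ∀ u w : V, u ≠ v → w ≠ v → (∀ i : Fin 4, u ≠ ℓ i ∧ w ≠ ℓ i) →
        v ∈ s \ {u, w} ∧ ∀ i, ℓ i ∈ s \ {u, w} := by
      intro u w huv hwv hli
      exact ⟨Finset.mem_sdiff.mpr ⟨hv, notMem_pair' (Ne.symm huv) (Ne.symm hwv)⟩,
        fun i => Finset.mem_sdiff.mpr
          ⟨hl i, notMem_pair' (Ne.symm (hli i).1) (Ne.symm (hli i).2)⟩⟩
    constructor
    · rintro ⟨u, w, hleg, hnw⟩
      obtain ⟨huv, hwv, hli⟩ := avoid u w (Or.inl hleg)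
      obtain ⟨hlegiff, hTset⟩ := key u w huv hwv hli
      obtain ⟨hv', hl'⟩ := hinv u w huv hwv hli
      refine ⟨u, w, hlegiff.mp hleg, ?_⟩
      rw [hTset]
      exact fun h => hnw ((ih (s \ {u, w}) hv' hl').mpr h)
    · rintro ⟨u, w, hleg, hnw⟩
      obtain ⟨huv, hwv, hli⟩ := avoid u w (Or.inr hleg)
      obtain ⟨hlegiff, hTset⟩ := key u w huv hwv hli
      obtain ⟨hv', hl'⟩ := hinv u w huv hwv hli
      refine ⟨u, w, hlegiff.mpr hleg, fun h => hnw ?_⟩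
      rw [hTset]
      exact (ih (s \ {u, w}) hv' hl').mp h

/-- If `v` has at least four pendant leaves `ℓ 0, ℓ 1, ℓ 2, ℓ 3` in `G`, then deleting the
leaf `ℓ 3` (so that `v` keeps at least three leaves) does not change the outcome of
Non-Disconnecting Arc-Kayles. -/
theorem stmt_8 (G : SimpleGraph V) (v : V) (ℓ : Fin 4 → V)
    (hinj : Function.Injective ℓ)
    (hleaf : ∀ i : Fin 4, ∀ x : V, G.Adj (ℓ i) x ↔ x = v) :
    (NDFirstWins G Finset.univ ↔ NDFirstWins G (Finset.univ \ {ℓ 3})) := by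
  unfold NDFirstWins
  have h1 := ndwin_main G v ℓ hinj hleaf (Finset.univ : Finset V).card (Finset.univ : Finset V)
    (Finset.mem_univ v) (fun i => Finset.mem_univ (ℓ i))
  have hcard : (Finset.univ \ {ℓ 3} : Finset V).card ≤ (Finset.univ : Finset V).card :=
    Finset.card_le_card (fun x hx => (Finset.mem_sdiff.mp hx).1)
  have h2 := ndwinaux_fuel G (Finset.univ : Finset V).card (Finset.univ \ {ℓ 3} : Finset V).card
    (Finset.univ \ {ℓ 3}) hcard le_rfl
  exact h1.trans h2
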